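/- arXiv:2008.13287 — 2 statements merged into one kernel-verified Lean document; each statement's English description precedes it below -/
import Mathlib

section
/- Assume g_0 ≠ 0 and let B be an upper triangular matrix satisfying A·B = B·A = I. Then for every nonnegative integer s and all 1 ≤ k ≤ n, [B^s]_{k,n} = (a_k/a_n) times the coefficient of t^{n-k} in the power series (g(t)^{-1})^s, where g(t) = ∑_{j≥0} g_j t^j and g^{-1} denotes the multiplicative inverse of g in the ring of formal power series. -/
open PowerSeries Finset

noncomputable section

/-- Product of two infinite matrices of complex numbers (indexed by positive integers,
upper triangular): `[A·B]_{k,n} = ∑_{j=k}^{n} [A]_{k,j}·[B]_{j,n}`. -/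
def triMul (A B : ℕ → ℕ → ℂ) : ℕ → ℕ → ℂ :=
  fun k n => ∑ j ∈ Finset.Icc k n, A k j * B j n

/-- The identity matrix. -/
def triId : ℕ → ℕ → ℂ := fun k n => if k = n then 1 else 0

/-- Powers of a matrix: `A^0 = I`, `A^{s+1} = A^s · A`. -/
def triPow (A : ℕ → ℕ → ℂ) : ℕ → ℕ → ℕ → ℂ
  | 0 => triId
  | s + 1 => triMul (triPow A s) A

/-- Reindexing a convolution sum over `Icc k n` as a power-series coefficient. -/
lemma sum_Icc_coeff_mul (f₁ f₂ : PowerSeries ℂ) (k n : ℕ) (hkn : k ≤ n) :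
    ∑ j ∈ Finset.Icc k n, (PowerSeries.coeff (j - k) f₁) * (PowerSeries.coeff (n - j) f₂)
      = PowerSeries.coeff (n - k) (f₁ * f₂) := by
  rw [PowerSeries.coeff_mul, Finset.Nat.sum_antidiagonal_eq_sum_range_succ_mk,
    ← Finset.Ico_add_one_right_eq_Icc, Finset.sum_Ico_eq_sum_range]
  have h1 : n + 1 - k = n - k + 1 := by omega
  rw [h1]
  refine Finset.sum_congr rfl fun i hi => ?_
  simp only [Finset.mem_range] at hi
  have e1 : k + i - k = i := by omega
  have e2 : n - (k + i) = n - k - i := by omega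
  rw [e1, e2]

/-- Corollary: if `g_0 ≠ 0` and `B` is an upper triangular two-sided inverse of the
Toeplitz-type matrix `[A]_{k,n} = (a_k/a_n)·g_{n-k}`, then
`[B^s]_{k,n} = (a_k/a_n)·[t^{n-k}]((g(t)^{-1})^s)`. -/
theorem stmt10 (a : ℕ → ℂ) (ha : ∀ n, 1 ≤ n → a n ≠ 0)
    (g : ℕ → ℂ) (hg0 : g 0 ≠ 0)
    (A B : ℕ → ℕ → ℂ)
    (hAtri : ∀ k n, n < k → A k n = 0)
    (hBtri : ∀ k n, n < k → B k n = 0)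
    (hA : ∀ k n, 1 ≤ k → k ≤ n → A k n = a k / a n * g (n - k))
    (hAB : ∀ k n, 1 ≤ k → 1 ≤ n → triMul A B k n = triId k n)
    (hBA : ∀ k n, 1 ≤ k → 1 ≤ n → triMul B A k n = triId k n)
    (s : ℕ) (k n : ℕ) (hk : 1 ≤ k) (hkn : k ≤ n) :
    triPow B s k n = a k / a n * PowerSeries.coeff (n - k) (((PowerSeries.mk g)⁻¹) ^ s) := by
  set f : PowerSeries ℂ := (PowerSeries.mk g)⁻¹ with hfdef
  have hfg : f * PowerSeries.mk g = 1 :=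
    PowerSeries.inv_mul_cancel _ (by simpa using hg0)
  -- Step 1: B itself has the claimed form.
  have hB : ∀ n, ∀ k, 1 ≤ k → k ≤ n → B k n = a k / a n * PowerSeries.coeff (n - k) f := by
    intro n
    induction n using Nat.strong_induction_on with
    | _ n ih =>
      intro k hk hkn
      have hn1 : 1 ≤ n := hk.trans hkn
      -- target sum identity
      have hT : ∑ j ∈ Finset.Icc k n, (a k / a j * PowerSeries.coeff (j - k) f) * A j n
          = triId k n := by
        have step : ∀ j ∈ Finset.Icc k n,
            (a k / a j * PowerSeries.coeff (j - k) f) * A j n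
            = a k / a n * (PowerSeries.coeff (j - k) f *
                PowerSeries.coeff (n - j) (PowerSeries.mk g)) := by
          intro j hj
          rw [Finset.mem_Icc] at hj
          have hj1 : 1 ≤ j := hk.trans hj.1
          have haj : a j ≠ 0 := ha j hj1
          have han : a n ≠ 0 := ha n hn1
          rw [hA j n hj1 hj.2, PowerSeries.coeff_mk]
          field_simp
        rw [Finset.sum_congr rfl step, ← Finset.mul_sum,
          sum_Icc_coeff_mul f (PowerSeries.mk g) k n hkn, hfg]
        simp only [PowerSeries.coeff_one, triId]
        rcases eq_or_lt_of_le hkn with h | h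
        · subst h
          simp [div_self (ha k hk)]
        · have : n - k ≠ 0 := by omega
          simp [this, Nat.ne_of_lt h]
      have hS := hBA k n hk hn1
      unfold triMul at hS
      have hzero : ∑ j ∈ Finset.Icc k n,
          (B k j - a k / a j * PowerSeries.coeff (j - k) f) * A j n = 0 := by
        have : ∑ j ∈ Finset.Icc k n,
            (B k j - a k / a j * PowerSeries.coeff (j - k) f) * A j n
            = (∑ j ∈ Finset.Icc k n, B k j * A j n)
              - ∑ j ∈ Finset.Icc k n, (a k / a j * PowerSeries.coeff (j - k) f) * A j n := by
          rw [← Finset.sum_sub_distrib]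
          exact Finset.sum_congr rfl fun j _ => by ring
        rw [this, hS, hT, sub_self]
      have hsingle : ∑ j ∈ Finset.Icc k n,
          (B k j - a k / a j * PowerSeries.coeff (j - k) f) * A j n
          = (B k n - a k / a n * PowerSeries.coeff (n - k) f) * A n n := by
        refine Finset.sum_eq_single_of_mem n (Finset.mem_Icc.mpr ⟨hkn, le_refl n⟩) ?_
        intro j hj hjn
        rw [Finset.mem_Icc] at hj
        have hjlt : j < n := lt_of_le_of_ne hj.2 hjn
        rw [ih j hjlt k hk hj.1, sub_self, zero_mul]
      have hAnn : A n n = g 0 := by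
        rw [hA n n hn1 (le_refl n), Nat.sub_self, div_self (ha n hn1), one_mul]
      rw [hsingle, hAnn, mul_eq_zero] at hzero
      rcases hzero with h | h
      · exact sub_eq_zero.mp h
      · exact absurd h hg0
  -- Step 2: induction on s.
  have hpow : ∀ s, ∀ k n, 1 ≤ k → k ≤ n →
      triPow B s k n = a k / a n * PowerSeries.coeff (n - k) (f ^ s) := by
    intro s
    induction s with
    | zero =>
      intro k n hk hkn
      simp only [triPow, triId, pow_zero, PowerSeries.coeff_one]
      rcases eq_or_lt_of_le hkn with h | h
      · subst h
        simp [div_self (ha k hk)]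
      · have : n - k ≠ 0 := by omega
        simp [this, Nat.ne_of_lt h]
    | succ s ihs =>
      intro k n hk hkn
      show triMul (triPow B s) B k n = _
      unfold triMul
      have step : ∀ j ∈ Finset.Icc k n, triPow B s k j * B j n
          = a k / a n * (PowerSeries.coeff (j - k) (f ^ s) *
              PowerSeries.coeff (n - j) f) := by
        intro j hj
        rw [Finset.mem_Icc] at hj
        have hj1 : 1 ≤ j := hk.trans hj.1
        have haj : a j ≠ 0 := ha j hj1
        have han : a n ≠ 0 := ha n (hk.trans hkn)
        rw [ihs k j hk hj.1, hB n j hj1 hj.2]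
        field_simp
      rw [Finset.sum_congr rfl step, ← Finset.mul_sum,
        sum_Icc_coeff_mul (f ^ s) f k n hkn, ← pow_succ]
  exact hpow s k n hk hkn
end
end

section
/- For every nonnegative integer s and all 1 ≤ k ≤ n, [A^s]_{k,n} = (a_k/a_n)·B_{n,k}(φ^⟨s⟩), where B_{n,k}(F) denotes the partial Bell polynomial of a power series F with F(0) = 0, defined by B_{n,k}(F) = (n!/k!) times the coefficient of t^n in F(t)^k. -/
open PowerSeries Finset

noncomputable section

/-- Composition `F ∘ G` of formal power series (intended for `G` with zero
constant coefficient): the coefficient of `t^n` is `∑_{j=0}^{n} F_j · [t^n](G^j)`. -/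
def psComp (F G : PowerSeries ℂ) : PowerSeries ℂ :=
  PowerSeries.mk fun n =>
    ∑ j ∈ Finset.range (n + 1), (PowerSeries.coeff j F) * (PowerSeries.coeff n (G ^ j))

/-- Iterated composition: `φ^⟨0⟩ = t`, `φ^⟨s+1⟩ = φ^⟨s⟩ ∘ φ`. -/
def iterComp (φ : PowerSeries ℂ) : ℕ → PowerSeries ℂ
  | 0 => PowerSeries.X
  | s + 1 => psComp (iterComp φ s) φ

/-- The partial Bell polynomial of a power series `F` with `F(0) = 0`:
`B_{n,k}(F) = (n!/k!)·[t^n](F(t)^k)`. -/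
def bellPartial (F : PowerSeries ℂ) (n k : ℕ) : ℂ :=
  (n.factorial : ℂ) / (k.factorial : ℂ) * PowerSeries.coeff n (F ^ k)


lemma coeff_pow_zero_of_lt {G : PowerSeries ℂ} (hG : constantCoeff G = 0)
    {n d : ℕ} (h : n < d) : PowerSeries.coeff n (G ^ d) = 0 :=
  (PowerSeries.X_pow_dvd_iff.mp
    (pow_dvd_pow_of_dvd (PowerSeries.X_dvd_iff.mpr hG) d)) n h

lemma agree_mul {F₁ F₂ G₁ G₂ : PowerSeries ℂ} {n : ℕ}
    (h1 : ∀ m ≤ n, PowerSeries.coeff m F₁ = PowerSeries.coeff m F₂)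
    (h2 : ∀ m ≤ n, PowerSeries.coeff m G₁ = PowerSeries.coeff m G₂) :
    ∀ m ≤ n, PowerSeries.coeff m (F₁ * G₁) = PowerSeries.coeff m (F₂ * G₂) := by
  intro m hm
  rw [PowerSeries.coeff_mul, PowerSeries.coeff_mul]
  refine Finset.sum_congr rfl fun p hp => ?_
  rw [Finset.HasAntidiagonal.mem_antidiagonal] at hp
  rw [h1 p.1 (le_trans (by omega) hm), h2 p.2 (le_trans (by omega) hm)]

lemma agree_pow {F₁ F₂ : PowerSeries ℂ} {n : ℕ}
    (h : ∀ m ≤ n, PowerSeries.coeff m F₁ = PowerSeries.coeff m F₂) (k : ℕ) :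
    ∀ m ≤ n, PowerSeries.coeff m (F₁ ^ k) = PowerSeries.coeff m (F₂ ^ k) := by
  induction k with
  | zero => simp
  | succ k ih => simpa [pow_succ] using agree_mul ih h

lemma coeff_aeval {G : PowerSeries ℂ} (hG : constantCoeff G = 0)
    (p : Polynomial ℂ) (m : ℕ) :
    PowerSeries.coeff m (Polynomial.aeval G p) =
      ∑ j ∈ Finset.range (m + 1), p.coeff j * PowerSeries.coeff m (G ^ j) := by
  rw [Polynomial.aeval_eq_sum_range, map_sum]
  simp only [LinearMap.map_smul, smul_eq_mul]
  have h1 : ∑ j ∈ Finset.range (p.natDegree + 1), p.coeff j * PowerSeries.coeff m (G ^ j)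
      = ∑ j ∈ Finset.range (max (p.natDegree + 1) (m + 1)),
          p.coeff j * PowerSeries.coeff m (G ^ j) := by
    refine Finset.sum_subset (Finset.range_subset_range.mpr (Nat.le_max_left _ _)) ?_
    intro j hj hj'
    rw [Finset.mem_range, not_lt] at hj'
    rw [Polynomial.coeff_eq_zero_of_natDegree_lt (by omega), zero_mul]
  have h2 : ∑ j ∈ Finset.range (m + 1), p.coeff j * PowerSeries.coeff m (G ^ j)
      = ∑ j ∈ Finset.range (max (p.natDegree + 1) (m + 1)),
          p.coeff j * PowerSeries.coeff m (G ^ j) := by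
    refine Finset.sum_subset (Finset.range_subset_range.mpr (Nat.le_max_right _ _)) ?_
    intro j hj hj'
    rw [Finset.mem_range, not_lt] at hj'
    rw [coeff_pow_zero_of_lt hG (by omega), mul_zero]
  rw [h1, h2]

lemma coeff_psComp (F G : PowerSeries ℂ) (n : ℕ) :
    PowerSeries.coeff n (psComp F G) =
      ∑ j ∈ Finset.range (n + 1), (PowerSeries.coeff j F) *
        (PowerSeries.coeff n (G ^ j)) := by
  simp [psComp]

lemma constantCoeff_psComp (F G : PowerSeries ℂ)
    (hF : constantCoeff F = 0) : constantCoeff (psComp F G) = 0 := by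
  rw [← PowerSeries.coeff_zero_eq_constantCoeff_apply, coeff_psComp]
  simp [PowerSeries.coeff_zero_eq_constantCoeff, hF]

lemma coeff_psComp_pow {G : PowerSeries ℂ} (hG : constantCoeff G = 0)
    (F : PowerSeries ℂ) (k n : ℕ) :
    PowerSeries.coeff n ((psComp F G) ^ k) =
      ∑ j ∈ Finset.range (n + 1), (PowerSeries.coeff j (F ^ k)) *
        (PowerSeries.coeff n (G ^ j)) := by
  set p : Polynomial ℂ := PowerSeries.trunc (n + 1) F with hp
  have hagree : ∀ m ≤ n, PowerSeries.coeff m (psComp F G) =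
      PowerSeries.coeff m (Polynomial.aeval G p) := by
    intro m hm
    rw [coeff_psComp, coeff_aeval hG]
    refine Finset.sum_congr rfl fun j hj => ?_
    rw [Finset.mem_range] at hj
    rw [hp, PowerSeries.coeff_trunc, if_pos (by omega)]
  have h1 : PowerSeries.coeff n ((psComp F G) ^ k) =
      PowerSeries.coeff n ((Polynomial.aeval G p) ^ k) :=
    agree_pow hagree k n le_rfl
  rw [h1, ← map_pow, coeff_aeval hG]
  refine Finset.sum_congr rfl fun j hj => ?_
  rw [Finset.mem_range] at hj
  congr 1
  have hcoe : ∀ m ≤ n, PowerSeries.coeff m ((p : PowerSeries ℂ)) =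
      PowerSeries.coeff m F := by
    intro m hm
    rw [Polynomial.coeff_coe, hp, PowerSeries.coeff_trunc, if_pos (by omega)]
  have := agree_pow hcoe k j (by omega)
  rw [← Polynomial.coeff_coe, Polynomial.coe_pow, this]

lemma bell_comp {F G : PowerSeries ℂ} (hF : constantCoeff F = 0)
    (hG : constantCoeff G = 0) (n k : ℕ) :
    bellPartial (psComp F G) n k =
      ∑ j ∈ Finset.Icc k n, bellPartial F j k * bellPartial G n j := by
  unfold bellPartial
  rw [coeff_psComp_pow hG, Finset.mul_sum]
  rw [show Finset.range (n + 1) = Finset.Icc 0 n by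
    ext x; simp [Nat.lt_succ_iff]]
  rw [← Finset.sum_subset (Finset.Icc_subset_Icc_left (Nat.zero_le k))]
  · refine Finset.sum_congr rfl fun j hj => ?_
    rw [Finset.mem_Icc] at hj
    have hj0 : (j.factorial : ℂ) ≠ 0 := Nat.cast_ne_zero.mpr (Nat.factorial_ne_zero _)
    have hk0 : (k.factorial : ℂ) ≠ 0 := Nat.cast_ne_zero.mpr (Nat.factorial_ne_zero _)
    field_simp
  · intro j hj hj'
    rw [Finset.mem_Icc] at hj hj'
    rw [coeff_pow_zero_of_lt hF (by omega), zero_mul, mul_zero]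

lemma constantCoeff_iterComp (φ : PowerSeries ℂ) (s : ℕ) :
    constantCoeff (iterComp φ s) = 0 := by
  induction s with
  | zero => simp [iterComp]
  | succ s ih => exact constantCoeff_psComp _ _ ih

/-- Corollary: for the matrix `[A]_{k,n} = (a_k/a_n)·B_{n,k}(φ)` one has
`[A^s]_{k,n} = (a_k/a_n)·B_{n,k}(φ^⟨s⟩)`. -/
theorem stmt11 (a : ℕ → ℂ) (ha : ∀ n, 1 ≤ n → a n ≠ 0)
    (φ : PowerSeries ℂ)
    (hφ0 : constantCoeff φ = 0)
    (hφ1 : constantCoeff (derivativeFun φ) ≠ 0)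
    (A : ℕ → ℕ → ℂ)
    (hAtri : ∀ k n, n < k → A k n = 0)
    (hA : ∀ k n, 1 ≤ k → k ≤ n → A k n = a k / a n * bellPartial φ n k)
    (s : ℕ) (k n : ℕ) (hk : 1 ≤ k) (hkn : k ≤ n) :
    triPow A s k n = a k / a n * bellPartial (iterComp φ s) n k := by
  induction s generalizing k n with
  | zero =>
    by_cases h : k = n
    · subst h
      simp [triPow, triId, bellPartial, iterComp, PowerSeries.coeff_X_pow,
        div_self (ha k hk), div_self
          (show (k.factorial : ℂ) ≠ 0 from Nat.cast_ne_zero.mpr (Nat.factorial_ne_zero _))]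
    · simp [triPow, triId, bellPartial, iterComp, PowerSeries.coeff_X_pow, h,
        Ne.symm h]
  | succ s ih =>
    show triMul (triPow A s) A k n = _
    rw [show iterComp φ (s + 1) = psComp (iterComp φ s) φ from rfl,
      bell_comp (constantCoeff_iterComp φ s) hφ0 n k, Finset.mul_sum]
    unfold triMul
    refine Finset.sum_congr rfl fun j hj => ?_
    rw [Finset.mem_Icc] at hj
    have hkj : k ≤ j := hj.1
    have hjn : j ≤ n := hj.2
    have haj : a j ≠ 0 := ha j (le_trans hk hkj)
    have han : a n ≠ 0 := ha n (le_trans hk hkn)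
    rw [ih k j hk hkj, hA j n (le_trans hk hkj) hjn]
    field_simp
end
end
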